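/- For any family X of subsets of ℕ that is closed under arithmetic definability (in particular, closed under the map A ↦ {⌜A ∩ n⌝ : n ∈ ℕ} using a Gödel coding of finite sets), the poset X/Fin (infinite sets in X ordered by almost inclusion) has an antichain of cardinality |X|. Consequently, every arithmetically closed family of reals whose quotient X/Fin satisfies the countable chain condition is countable. -/

import Mathlib

open Classical in
/-- The finite set `A ∩ {0, 1, ..., n-1}` (as a `Finset`). -/
noncomputable def initSeg (A : Set ℕ) (n : ℕ) : Finset ℕ :=
  (Finset.range n).filter (fun m => m ∈ A)

/-- `A' = {⌜A ∩ n⌝ : n ∈ ℕ}`, the set of codes of initial segments of `A`. -/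
noncomputable def primeSet (e : Finset ℕ → ℕ) (A : Set ℕ) : Set ℕ :=
  Set.range (fun n => e (initSeg A n))

lemma mem_initSeg {A : Set ℕ} {n m : ℕ} : m ∈ initSeg A n ↔ m < n ∧ m ∈ A := by
  classical
  simp [initSeg]

/-- half of almost-disjointness, with `k ∈ A \ B`. -/
lemma ad_aux (e : Finset ℕ → ℕ) (he : Function.Injective e) {A B : Set ℕ} {k : ℕ}
    (hkA : k ∈ A) (hkB : k ∉ B) :
    primeSet e A ∩ primeSet e B ⊆ e '' {t : Finset ℕ | t ⊆ Finset.range (k + 1)} := by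
  rintro x ⟨⟨n, rfl⟩, ⟨m, hm⟩⟩
  have hs : initSeg A n = initSeg B m := he hm.symm
  refine ⟨initSeg A n, ?_, rfl⟩
  by_cases hn : n ≤ k
  · intro a ha
    have := (mem_initSeg.mp ha).1
    exact Finset.mem_range.mpr (lt_of_lt_of_le this (le_trans hn (Nat.le_succ k)))
  · by_cases hm' : m ≤ k
    · intro a ha
      rw [hs] at ha
      have := (mem_initSeg.mp ha).1
      exact Finset.mem_range.mpr (lt_of_lt_of_le this (le_trans hm' (Nat.le_succ k)))
    · exfalso
      have hk1 : k ∈ initSeg A n := mem_initSeg.mpr ⟨Nat.lt_of_not_le hn, hkA⟩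
      rw [hs] at hk1
      exact hkB (mem_initSeg.mp hk1).2

lemma primeSet_ad (e : Finset ℕ → ℕ) (he : Function.Injective e) {A B : Set ℕ}
    (hAB : A ≠ B) : (primeSet e A ∩ primeSet e B).Finite := by
  have hne : ∃ k, (k ∈ A ∧ k ∉ B) ∨ (k ∈ B ∧ k ∉ A) := by
    by_contra h
    push_neg at h
    apply hAB
    ext k
    have := h k
    tauto
  obtain ⟨k, hk | hk⟩ := hne
  all_goals {
    have hfin : ({t : Finset ℕ | t ⊆ Finset.range (k+1)}).Finite := by
      have h' : {t : Finset ℕ | t ⊆ Finset.range (k+1)}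
          = ↑((Finset.range (k+1)).powerset) := by
        ext t; simp [Finset.mem_powerset, Finset.subset_iff, Set.subset_def, Finset.mem_range]
      rw [h']; exact Finset.finite_toSet _
    first
    | exact Set.Finite.subset (hfin.image e) (ad_aux e he hk.1 hk.2)
    | { rw [Set.inter_comm]
        exact Set.Finite.subset (hfin.image e) (ad_aux e he hk.1 hk.2) } }

lemma primeSet_inj (e : Finset ℕ → ℕ) (he : Function.Injective e) :
    Function.Injective (primeSet e) := by
  intro A B h
  by_contra hAB
  have hne : ∃ k, (k ∈ A ∧ k ∉ B) ∨ (k ∈ B ∧ k ∉ A) := by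
    by_contra hc
    push_neg at hc
    apply hAB
    ext k
    have := hc k
    tauto
  obtain ⟨k, ⟨hkA, hkB⟩ | ⟨hkB, hkA⟩⟩ := hne
  · have hx : e (initSeg A (k+1)) ∈ primeSet e B := h ▸ ⟨k+1, rfl⟩
    obtain ⟨m, hm⟩ := hx
    have hs : initSeg B m = initSeg A (k+1) := he hm
    have : k ∈ initSeg A (k+1) := mem_initSeg.mpr ⟨Nat.lt_succ_self k, hkA⟩
    rw [← hs] at this
    exact hkB (mem_initSeg.mp this).2
  · have hx : e (initSeg B (k+1)) ∈ primeSet e A := h ▸ ⟨k+1, rfl⟩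
    obtain ⟨m, hm⟩ := hx
    have hs : initSeg A m = initSeg B (k+1) := he hm
    have : k ∈ initSeg B (k+1) := mem_initSeg.mpr ⟨Nat.lt_succ_self k, hkB⟩
    rw [← hs] at this
    exact hkA (mem_initSeg.mp this).2

lemma primeSet_infinite (e : Finset ℕ → ℕ) (he : Function.Injective e) {A : Set ℕ}
    (hA : A.Infinite) : (primeSet e A).Infinite := by
  have hsub : (fun a => e (initSeg A (a+1))) '' A ⊆ primeSet e A := by
    rintro x ⟨a, _, rfl⟩
    exact ⟨a+1, rfl⟩
  have hinj : Set.InjOn (fun a => e (initSeg A (a+1))) A := by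
    intro a ha b hb hab
    have hs : initSeg A (a+1) = initSeg A (b+1) := he hab
    have h1 : a ∈ initSeg A (b+1) := hs ▸ mem_initSeg.mpr ⟨Nat.lt_succ_self a, ha⟩
    have h2 : b ∈ initSeg A (a+1) := hs ▸ mem_initSeg.mpr ⟨Nat.lt_succ_self b, hb⟩
    have := (mem_initSeg.mp h1).1
    have := (mem_initSeg.mp h2).1
    omega
  exact Set.Infinite.mono hsub (Set.Infinite.image hinj hA)

theorem stmt0 (e : Finset ℕ → ℕ) (he : Function.Injective e)
    (X : Set (Set ℕ)) (hcl : ∀ A ∈ X, primeSet e A ∈ X) :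
    (∃ 𝒜 : Set (Set ℕ), 𝒜 ⊆ X ∧ Cardinal.mk 𝒜 = Cardinal.mk X ∧
      ∀ A ∈ 𝒜, ∀ B ∈ 𝒜, A ≠ B → (A ∩ B).Finite) ∧
    ((∀ 𝒜 : Set (Set ℕ), 𝒜 ⊆ X → (∀ A ∈ 𝒜, A.Infinite) →
        (∀ A ∈ 𝒜, ∀ B ∈ 𝒜, A ≠ B → (A ∩ B).Finite) → 𝒜.Countable) →
      X.Countable) := by
  constructor
  · refine ⟨primeSet e '' X, ?_, ?_, ?_⟩
    · rintro _ ⟨A, hA, rfl⟩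
      exact hcl A hA
    · exact Cardinal.mk_image_eq (primeSet_inj e he)
    · rintro _ ⟨A, _, rfl⟩ _ ⟨B, _, rfl⟩ hne
      exact primeSet_ad e he (fun h => hne (h ▸ rfl))
  · intro hccc
    set S : Set (Set ℕ) := {A ∈ X | A.Infinite} with hS
    have h1 : (primeSet e '' S).Countable := by
      apply hccc
      · rintro _ ⟨A, hA, rfl⟩
        exact hcl A hA.1
      · rintro _ ⟨A, hA, rfl⟩
        exact primeSet_infinite e he hA.2
      · rintro _ ⟨A, _, rfl⟩ _ ⟨B, _, rfl⟩ hne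
        exact primeSet_ad e he (fun h => hne (h ▸ rfl))
    have h2 : S.Countable := by
      have := h1.preimage (primeSet_inj e he)
      exact this.mono (Set.subset_preimage_image _ _)
    have h3 : ({A ∈ X | A.Finite} : Set (Set ℕ)).Countable := by
      have : ({t : Set ℕ | t.Finite ∧ t ⊆ Set.univ}).Countable :=
        Set.countable_setOf_finite_subset Set.countable_univ
      refine Set.Countable.mono ?_ this
      intro A hA
      exact ⟨hA.2, Set.subset_univ _⟩
    have : X = {A ∈ X | A.Finite} ∪ S := by
      ext A
      by_cases h : A.Finite
      · simp [hS, h]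
      · simp [hS, h]; exact fun _ => h
    rw [this]
    exact h3.union h2
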